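/- Let f be an element of the free Lie algebra over k on t generators. Then f vanishes under every substitution of derivations of P_n (evaluated in the Lie algebra of derivations of P_n, with bracket the commutator) if and only if f vanishes under every substitution of operators L_{w_1},…,L_{w_t} (with w_1,…,w_t derivations of P_n), evaluated via commutators in the associative algebra of k-linear endomorphisms of the space of derivations of P_n; that is, f is an identity of the Witt algebra W_n if and only if the corresponding left operator identity holds in the left-symmetric algebra of derivations. -/

import Mathlib

open MvPolynomial

/-- `Pn k n` is the polynomial algebra `k[x₁,…,xₙ]`. -/
abbrev Pn (k : Type*) [CommRing k] (n : ℕ) := MvPolynomial (Fin n) k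

/-- `Der k n` is the space of `k`-linear derivations of `Pn k n`. -/
abbrev Der (k : Type*) [CommRing k] (n : ℕ) := Derivation k (Pn k n) (Pn k n)

variable {k : Type*} [Field k] [CharZero k] {n : ℕ}

/-- The left-symmetric product of derivations: `(D · E)(xᵢ) = D (E xᵢ)`. -/
noncomputable def lsMul (D E : Der k n) : Der k n :=
  MvPolynomial.mkDerivation k (fun i => D (E (MvPolynomial.X i)))

/-- The Jacobian matrix of a derivation: `(J D)ᵢⱼ = ∂(D xᵢ)/∂xⱼ`. -/
noncomputable def jac (D : Der k n) : Matrix (Fin n) (Fin n) (Pn k n) :=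
  Matrix.of fun i j => MvPolynomial.pderiv j (D (MvPolynomial.X i))

/-- The divergence of a derivation. -/
noncomputable def divg (D : Der k n) : Pn k n :=
  ∑ i, MvPolynomial.pderiv i (D (MvPolynomial.X i))

/-- Right powers: `rpow D 1 = D`, `rpow D (r+1) = (rpow D r) · D` (for `r ≥ 1`). -/
noncomputable def rpow (D : Der k n) : ℕ → Der k n
  | 0 => D
  | 1 => D
  | (r+2) => lsMul (rpow D (r+1)) D

/-- Left powers: `lpow D 1 = D`, `lpow D (r+1) = D · (lpow D r)` (for `r ≥ 1`). -/
noncomputable def lpow (D : Der k n) : ℕ → Der k n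
  | 0 => D
  | 1 => D
  | (r+2) => lsMul D (lpow D (r+1))

/-- Right multiplication operator `R_D : E ↦ E · D`, as a `k`-linear endomorphism. -/
noncomputable def rmulOp (D : Der k n) : Der k n →ₗ[k] Der k n where
  toFun E := lsMul E D
  map_add' E₁ E₂ := by
    show (MvPolynomial.mkDerivationEquiv k) _ =
      (MvPolynomial.mkDerivationEquiv k) _ + (MvPolynomial.mkDerivationEquiv k) _
    rw [← map_add]
    exact congrArg _ (funext fun i => by simp)
  map_smul' c E := by
    show (MvPolynomial.mkDerivationEquiv k) _ = c • (MvPolynomial.mkDerivationEquiv k) _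
    rw [← map_smul]
    exact congrArg _ (funext fun i => by simp)

/-- Left multiplication operator `L_D : E ↦ D · E`, as a `k`-linear endomorphism. -/
noncomputable def lmulOp (D : Der k n) : Der k n →ₗ[k] Der k n where
  toFun E := lsMul D E
  map_add' E₁ E₂ := by
    show (MvPolynomial.mkDerivationEquiv k) _ =
      (MvPolynomial.mkDerivationEquiv k) _ + (MvPolynomial.mkDerivationEquiv k) _
    rw [← map_add]
    exact congrArg _ (funext fun i => by simp)
  map_smul' c E := by
    show (MvPolynomial.mkDerivationEquiv k) _ = c • (MvPolynomial.mkDerivationEquiv k) _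
    rw [← map_smul]
    exact congrArg _ (funext fun i => by simp)

/-- `Zc F i a` is the coefficient of `t^i` in the image of `a` under `xⱼ ↦ xⱼ + t·fⱼ`. -/
noncomputable def Zc (F : Fin n → Pn k n) (i : ℕ) (a : Pn k n) : Pn k n :=
  (MvPolynomial.aeval
    (fun j => Polynomial.C (MvPolynomial.X j) + Polynomial.C (F j) * Polynomial.X :
      Fin n → Polynomial (Pn k n)) a).coeff i

/-- `PsiOp F m a = Σ (−1)^{k−1} r_k Z_{r₁}(Z_{r₂}(⋯ Z_{r_k}(a)⋯))`, summed over
compositions `(r₁,…,r_k)` of `m`. -/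
noncomputable def PsiOp (F : Fin n → Pn k n) (m : ℕ) (a : Pn k n) : Pn k n :=
  ∑ c : Composition m,
    (-1 : Pn k n) ^ (c.length - 1) * ((c.blocks.getLastD 0 : ℕ) : Pn k n) *
      (c.blocks.foldr (fun r b => Zc F r b) a)

attribute [local instance 100] LieRing.ofAssociativeRing

lemma lsMul_X (D E : Der k n) (i : Fin n) : lsMul D E (MvPolynomial.X i) = D (E (MvPolynomial.X i)) := by
  simp [lsMul, MvPolynomial.mkDerivation_X]

lemma lmulOp_apply (D E : Der k n) : lmulOp D E = lsMul D E := rfl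

/-- `D ↦ L_D` as a Lie algebra homomorphism. -/
noncomputable def Lhom : Der k n →ₗ⁅k⁆ Module.End k (Der k n) where
  toFun := lmulOp
  map_add' D D' := by
    ext E : 1
    apply MvPolynomial.derivation_ext
    intro i
    simp [lmulOp_apply, lsMul_X]
  map_smul' c D := by
    ext E : 1
    apply MvPolynomial.derivation_ext
    intro i
    simp [lmulOp_apply, lsMul_X]
  map_lie' := by
    intro D E
    ext F : 1
    apply MvPolynomial.derivation_ext
    intro i
    simp only [LieHom.lie_apply, Ring.lie_def, LinearMap.sub_apply, Module.End.mul_apply,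
      Derivation.sub_apply, lmulOp_apply, lsMul_X, Derivation.commutator_apply]

lemma Lhom_injective : Function.Injective (Lhom : Der k n →ₗ⁅k⁆ Module.End k (Der k n)) := by
  intro D D' h
  have heul := congrFun (congrArg (fun (T : Module.End k (Der k n)) => (T : Der k n → Der k n))
    h) (MvPolynomial.mkDerivation k (fun i => MvPolynomial.X i))
  apply MvPolynomial.derivation_ext
  intro i
  have := congrArg (fun (G : Der k n) => G (MvPolynomial.X i)) heul
  simpa [Lhom, lmulOp_apply, lsMul_X, MvPolynomial.mkDerivation_X] using this

/-- a free Lie algebra element `f` is an identity of the Witt algebra `Wₙ`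
iff the corresponding left operator identity holds in the left-symmetric algebra of
derivations. -/
theorem witt_identity_iff_left_operator_identity (hn : 1 ≤ n)
    (t : ℕ) (f : FreeLieAlgebra k (Fin t)) :
    (∀ w : Fin t → Der k n, FreeLieAlgebra.lift k w f = 0) ↔
      (∀ w : Fin t → Der k n,
        FreeLieAlgebra.lift k (fun i => (lmulOp (w i) : Module.End k (Der k n))) f = 0) := by
  have key : ∀ w : Fin t → Der k n,
      FreeLieAlgebra.lift k (fun i => (lmulOp (w i) : Module.End k (Der k n))) f =
        (Lhom : Der k n →ₗ⁅k⁆ Module.End k (Der k n)) (FreeLieAlgebra.lift k w f) := by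
    intro w
    have h : FreeLieAlgebra.lift k (fun i => (lmulOp (w i) : Module.End k (Der k n))) =
        (Lhom : Der k n →ₗ⁅k⁆ Module.End k (Der k n)).comp (FreeLieAlgebra.lift k w) := by
      apply FreeLieAlgebra.hom_ext
      intro x
      simp [Lhom]
    rw [h]; rfl
  constructor
  · intro h w
    rw [key w, h w, map_zero]
  · intro h w
    exact Lhom_injective (((key w).symm.trans (h w)).trans (map_zero (Lhom : Der k n →ₗ⁅k⁆ Module.End k (Der k n))).symm)
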